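/- Fix constants c > 0 and λ > 0 and a point x ∈ ℝ. Define R(x,t) = (λ t / 2)·e^{-λ t}/√(c²t² − x²)·I₁((λ/c)·√(c²t² − x²)) and Q(x,t) = e^{-λ t}/(π·√(c²t² − x²)) + (λ·e^{-λ t}/(2c))·L₀((λ/c)·√(c²t² − x²)) for t > |x|/c. Then R(x,t) → 0 and Q(x,t) → 0 as t → ∞. -/

import Mathlib

open Real Filter Topology

set_option maxHeartbeats 1000000

/-- Modified Bessel function of the first kind of nonnegative integer order `n`,
defined by its everywhere-convergent power series. -/
noncomputable def besselI (n : ℕ) (z : ℝ) : ℝ :=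
  ∑' k : ℕ, (1 / (Nat.factorial k * Nat.factorial (k + n) : ℝ)) * (z / 2) ^ (2 * k + n)

/-- Modified Struve function of order zero, defined by its power series. -/
noncomputable def struveL0 (z : ℝ) : ℝ :=
  ∑' k : ℕ, (1 / (Real.Gamma ((k : ℝ) + 3 / 2)) ^ 2) * (z / 2) ^ (2 * k + 1)


lemma sqrt_helper {a b u v : ℝ} (ha : 0 ≤ a) (hb : 0 ≤ b) (hu : 0 ≤ u)
    (h : a^2 * u ≤ b^2 * v) : a * Real.sqrt u ≤ b * Real.sqrt v := by
  have h1 : a * Real.sqrt u = Real.sqrt (a^2 * u) := by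
    rw [Real.sqrt_mul (by positivity), Real.sqrt_sq ha]
  have h2 : b * Real.sqrt v = Real.sqrt (b^2 * v) := by
    rw [Real.sqrt_mul (by positivity), Real.sqrt_sq hb]
  rw [h1, h2]; exact Real.sqrt_le_sqrt h

lemma fact_sqrt_le (k : ℕ) :
    ((2*k+1).factorial : ℝ) * Real.sqrt (k+2) ≤
      (k.factorial : ℝ) * ((k+1).factorial : ℝ) * 2^(2*k+1) := by
  induction k with
  | zero =>
      simp only [Nat.factorial]
      norm_num
  | succ n ih =>
      have lhs_eq : ((2*(n+1)+1).factorial : ℝ)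
          = (2*(n:ℝ)+3) * ((2*(n:ℝ)+2) * ((2*n+1).factorial : ℝ)) := by
        rw [show 2*(n+1)+1 = 2*n+1+1+1 from by ring, Nat.factorial_succ, Nat.factorial_succ]
        push_cast; ring
      have hQ : (((n+1).factorial : ℕ) : ℝ) = ((n:ℝ)+1) * (n.factorial : ℝ) := by
        rw [Nat.factorial_succ]; push_cast; ring
      have hQ2 : (((n+1+1).factorial : ℕ) : ℝ) = ((n:ℝ)+2) * ((n+1).factorial : ℝ) := by
        rw [Nat.factorial_succ]; push_cast; ring
      have key : (2*(n:ℝ)+3) * (2*(n:ℝ)+2) * Real.sqrt (((n+1:ℕ):ℝ)+2)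
          ≤ 4*((n:ℝ)+1)*((n:ℝ)+2) * Real.sqrt ((n:ℝ)+2) := by
        push_cast
        apply sqrt_helper (by positivity) (by positivity) (by positivity)
        nlinarith [sq_nonneg ((n:ℝ))]
      have hF : (0:ℝ) ≤ ((2*n+1).factorial : ℝ) := by positivity
      calc ((2*(n+1)+1).factorial : ℝ) * Real.sqrt (((n+1:ℕ):ℝ)+2)
          = ((2*n+1).factorial : ℝ) *
              ((2*(n:ℝ)+3) * (2*(n:ℝ)+2) * Real.sqrt (((n+1:ℕ):ℝ)+2)) := by
            rw [lhs_eq]; ring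
        _ ≤ ((2*n+1).factorial : ℝ) * (4*((n:ℝ)+1)*((n:ℝ)+2) * Real.sqrt ((n:ℝ)+2)) :=
            mul_le_mul_of_nonneg_left key hF
        _ = (4*((n:ℝ)+1)*((n:ℝ)+2)) * (((2*n+1).factorial : ℝ) * Real.sqrt ((n:ℝ)+2)) := by ring
        _ ≤ (4*((n:ℝ)+1)*((n:ℝ)+2)) * ((n.factorial : ℝ) * ((n+1).factorial : ℝ) * 2^(2*n+1)) := by
            exact mul_le_mul_of_nonneg_left ih (by positivity)
        _ = ((n+1).factorial : ℝ) * ((n+1+1).factorial : ℝ) * 2^(2*(n+1)+1) := by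
            rw [hQ2, hQ]; ring

lemma gamma_sqrt_le (k : ℕ) :
    ((2*k+1).factorial : ℝ) * Real.sqrt (k+1) ≤
      Real.Gamma ((k:ℝ)+3/2)^2 * 2^(2*k+1) := by
  induction k with
  | zero =>
      have h32 : Real.Gamma ((0:ℕ)+3/2) = Real.sqrt π / 2 := by
        rw [show ((0:ℕ):ℝ)+3/2 = 1/2 + 1 by norm_num, Real.Gamma_add_one (by norm_num),
          Real.Gamma_one_half_eq]
        ring
      rw [h32]
      simp only [Nat.factorial]
      norm_num
      rw [div_pow, Real.sq_sqrt pi_pos.le]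
      nlinarith [pi_gt_three]
  | succ n ih =>
      have lhs_eq : ((2*(n+1)+1).factorial : ℝ)
          = (2*(n:ℝ)+3) * ((2*(n:ℝ)+2) * ((2*n+1).factorial : ℝ)) := by
        rw [show 2*(n+1)+1 = 2*n+1+1+1 from by ring, Nat.factorial_succ, Nat.factorial_succ]
        push_cast; ring
      have hGrec : Real.Gamma (((n+1:ℕ):ℝ)+3/2) = ((n:ℝ)+3/2) * Real.Gamma ((n:ℝ)+3/2) := by
        rw [show ((n+1:ℕ):ℝ)+3/2 = ((n:ℝ)+3/2) + 1 by push_cast; ring,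
          Real.Gamma_add_one (by positivity)]
      have key : (2*(n:ℝ)+3) * (2*(n:ℝ)+2) * Real.sqrt (((n+1:ℕ):ℝ)+1)
          ≤ 4*((n:ℝ)+3/2)^2 * Real.sqrt ((n:ℝ)+1) := by
        push_cast
        apply sqrt_helper (by positivity) (by positivity) (by positivity)
        nlinarith [sq_nonneg ((n:ℝ))]
      have hF : (0:ℝ) ≤ ((2*n+1).factorial : ℝ) := by positivity
      calc ((2*(n+1)+1).factorial : ℝ) * Real.sqrt (((n+1:ℕ):ℝ)+1)
          = ((2*n+1).factorial : ℝ) *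
              ((2*(n:ℝ)+3) * (2*(n:ℝ)+2) * Real.sqrt (((n+1:ℕ):ℝ)+1)) := by
            rw [lhs_eq]; ring
        _ ≤ ((2*n+1).factorial : ℝ) * (4*((n:ℝ)+3/2)^2 * Real.sqrt ((n:ℝ)+1)) :=
            mul_le_mul_of_nonneg_left key hF
        _ = (4*((n:ℝ)+3/2)^2) * (((2*n+1).factorial : ℝ) * Real.sqrt ((n:ℝ)+1)) := by ring
        _ ≤ (4*((n:ℝ)+3/2)^2) * (Real.Gamma ((n:ℝ)+3/2)^2 * 2^(2*n+1)) :=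
            mul_le_mul_of_nonneg_left ih (by positivity)
        _ = Real.Gamma (((n+1:ℕ):ℝ)+3/2)^2 * 2^(2*(n+1)+1) := by
            rw [hGrec]; ring


lemma four_pow_fact_le (k : ℕ) : 4^k * k.factorial ≤ (2*k+1).factorial := by
  induction k with
  | zero => simp
  | succ n ih =>
      have e1 : 2*(n+1)+1 = 2*n+1+1+1 := by ring
      rw [e1, Nat.factorial_succ, Nat.factorial_succ, pow_succ, Nat.factorial_succ]
      calc 4^n * 4 * ((n+1) * n.factorial) = (4*(n+1)) * (4^n * n.factorial) := by ring
        _ ≤ (4*(n+1)) * (2*n+1).factorial := Nat.mul_le_mul_left _ ih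
        _ ≤ ((2*n+1+1+1) * (2*n+1+1)) * (2*n+1).factorial := by
            apply Nat.mul_le_mul_right
            nlinarith
        _ = (2*n+1+1+1) * ((2*n+1+1) * (2*n+1).factorial) := by ring

/-- generic summability: terms `w^(2k+1)/d k` with `d k ≥ k!/2`. -/
lemma summable_aux {w : ℝ} (hw : 0 ≤ w) {d : ℕ → ℝ}
    (hd0 : ∀ k, 0 < d k) (hd : ∀ k, (k.factorial : ℝ)/2 ≤ d k) :
    Summable (fun k : ℕ => w^(2*k+1) / d k) := by
  refine Summable.of_nonneg_of_le
    (fun k => div_nonneg (pow_nonneg hw _) (hd0 k).le) (fun k => ?_)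
    ((Real.summable_pow_div_factorial (w^2)).mul_left (2*w))
  have h1 : w^(2*k+1) = w * (w^2)^k := by rw [← pow_mul]; ring
  have hfk : (0:ℝ) < (k.factorial : ℝ) := by positivity
  rw [h1, div_le_iff₀ (hd0 k)]
  have h4 : (w^2)^k / (k.factorial:ℝ) * ((k.factorial:ℝ)/2) ≤ (w^2)^k / (k.factorial:ℝ) * d k :=
    mul_le_mul_of_nonneg_left (hd k) (by positivity)
  have h5 : (w^2)^k / (k.factorial:ℝ) * ((k.factorial:ℝ)/2) = (w^2)^k / 2 := by
    field_simp
  nlinarith [mul_le_mul_of_nonneg_left h4 (by linarith : (0:ℝ) ≤ 2*w)]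

lemma E_le_exp {w : ℝ} (hw : 0 ≤ w) :
    (∑' k : ℕ, w^(2*k+1) / ((2*k+1).factorial : ℝ)) ≤ Real.exp w := by
  have hexp : Real.exp w = ∑' n : ℕ, w^n / (n.factorial : ℝ) := by
    rw [Real.exp_eq_exp_ℝ, NormedSpace.exp_eq_tsum_div]
  rw [hexp]
  apply Summable.tsum_le_tsum_of_inj (fun k => 2*k+1) (fun a b h => by dsimp at h; omega)
  · intro c _; positivity
  · intro k; exact le_refl _
  · refine summable_aux hw (fun k => by positivity) (fun k => ?_)
    have h' : ((k.factorial : ℕ):ℝ) ≤ ((2*k+1).factorial : ℝ) := by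
      exact_mod_cast Nat.factorial_le (show k ≤ 2*k+1 by omega)
    have : (0:ℝ) < (k.factorial : ℝ) := by positivity
    linarith
  · exact Real.summable_pow_div_factorial w

lemma summable_E {w : ℝ} (hw : 0 ≤ w) :
    Summable (fun k : ℕ => w^(2*k+1) / ((2*k+1).factorial : ℝ)) := by
  refine summable_aux hw (fun k => by positivity) (fun k => ?_)
  have h : ((k.factorial : ℕ):ℝ) ≤ ((2*k+1).factorial : ℝ) := by
    exact_mod_cast Nat.factorial_le (show k ≤ 2*k+1 by omega)
  have : (0:ℝ) < (k.factorial : ℝ) := by positivity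
  linarith

noncomputable def auxA (z : ℝ) : ℝ :=
  ∑' k : ℕ, z^(2*k+1) / (((2*k+1).factorial : ℝ) * Real.sqrt ((k:ℝ)+1))

lemma one_le_sqrt_succ (k : ℕ) : 1 ≤ Real.sqrt ((k:ℝ)+1) := by
  apply Real.le_sqrt_of_sq_le
  have : (0:ℝ) ≤ (k:ℝ) := Nat.cast_nonneg k
  nlinarith

lemma summable_A {z : ℝ} (hz : 0 ≤ z) :
    Summable (fun k : ℕ => z^(2*k+1) / (((2*k+1).factorial : ℝ) * Real.sqrt ((k:ℝ)+1))) := by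
  refine summable_aux hz (fun k => by positivity) (fun k => ?_)
  have h1 : ((k.factorial : ℕ):ℝ) ≤ ((2*k+1).factorial : ℝ) := by
    exact_mod_cast Nat.factorial_le (show k ≤ 2*k+1 by omega)
  have h2 := one_le_sqrt_succ k
  have h3 : (0:ℝ) < ((2*k+1).factorial : ℝ) := by positivity
  nlinarith [(by positivity : (0:ℝ) < (k.factorial:ℝ))]

lemma A_le {z : ℝ} (hz : 1 ≤ z) :
    auxA z ≤ 3*Real.exp z/Real.sqrt z + Real.exp (7*z/10) := by
  have hz0 : (0:ℝ) < z := by linarith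
  have hsz : (0:ℝ) < Real.sqrt z := Real.sqrt_pos.mpr hz0
  set C := Real.exp (Real.log 2 * (z/4)) with hC
  have hC0 : 0 < C := Real.exp_pos _
  have key : ∀ k : ℕ, z^(2*k+1) / (((2*k+1).factorial : ℝ) * Real.sqrt ((k:ℝ)+1))
      ≤ 3/Real.sqrt z * (z^(2*k+1) / ((2*k+1).factorial : ℝ))
        + C * ((z/2)^(2*k+1) / ((2*k+1).factorial : ℝ)) := by
    intro k
    have hF : (0:ℝ) < ((2*k+1).factorial : ℝ) := by positivity
    have hsk : (0:ℝ) < Real.sqrt ((k:ℝ)+1) := by positivity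
    by_cases h : z/8 ≤ (k:ℝ)+1
    · have h1 : Real.sqrt z ≤ 3 * Real.sqrt ((k:ℝ)+1) := by
        have a1 : Real.sqrt z ≤ Real.sqrt (8*((k:ℝ)+1)) :=
          Real.sqrt_le_sqrt (by linarith)
        have a2 : 1 * Real.sqrt (8*((k:ℝ)+1)) ≤ 3 * Real.sqrt ((k:ℝ)+1) := by
          apply sqrt_helper (by norm_num) (by norm_num) (by positivity)
          have : (0:ℝ) ≤ (k:ℝ) := Nat.cast_nonneg k
          nlinarith
        rw [one_mul] at a2
        linarith
      have h2 : (1:ℝ)/(Real.sqrt ((k:ℝ)+1)) ≤ 3/Real.sqrt z := by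
        rw [div_le_div_iff₀ hsk hsz]
        linarith
      have h3 : z^(2*k+1) / (((2*k+1).factorial : ℝ) * Real.sqrt ((k:ℝ)+1))
          = (z^(2*k+1) / ((2*k+1).factorial : ℝ)) * (1/Real.sqrt ((k:ℝ)+1)) := by
        field_simp
      have h4 : (0:ℝ) ≤ z^(2*k+1) / ((2*k+1).factorial : ℝ) := by positivity
      have h5 : (0:ℝ) ≤ C * ((z/2)^(2*k+1) / ((2*k+1).factorial : ℝ)) := by positivity
      calc z^(2*k+1) / (((2*k+1).factorial : ℝ) * Real.sqrt ((k:ℝ)+1))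
          = (z^(2*k+1) / ((2*k+1).factorial : ℝ)) * (1/Real.sqrt ((k:ℝ)+1)) := h3
        _ ≤ (z^(2*k+1) / ((2*k+1).factorial : ℝ)) * (3/Real.sqrt z) :=
            mul_le_mul_of_nonneg_left h2 h4
        _ = 3/Real.sqrt z * (z^(2*k+1) / ((2*k+1).factorial : ℝ)) := by ring
        _ ≤ _ := le_add_of_nonneg_right h5
    · push_neg at h
      have hm : ((2*k+1 : ℕ):ℝ) ≤ z/4 := by push_cast; linarith
      have hpow : ((2:ℝ)^(2*k+1)) ≤ C := by
        have e1 : ((2:ℝ)^(2*k+1)) = Real.exp (((2*k+1:ℕ):ℝ) * Real.log 2) := by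
          rw [← Real.log_pow, Real.exp_log (by positivity)]
        rw [e1, hC]
        apply Real.exp_le_exp.mpr
        have hl2 : (0:ℝ) ≤ Real.log 2 := Real.log_nonneg one_le_two
        nlinarith
      have hzz : z^(2*k+1) = 2^(2*k+1)*(z/2)^(2*k+1) := by
        rw [← mul_pow, show (2:ℝ)*(z/2) = z by ring]
      have h6 : (0:ℝ) ≤ 3/Real.sqrt z * (z^(2*k+1) / ((2*k+1).factorial : ℝ)) := by positivity
      have hs1 := one_le_sqrt_succ k
      calc z^(2*k+1) / (((2*k+1).factorial : ℝ) * Real.sqrt ((k:ℝ)+1))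
          ≤ z^(2*k+1) / (((2*k+1).factorial : ℝ) * 1) := by
            apply div_le_div_of_nonneg_left (by positivity) (by positivity)
            exact mul_le_mul_of_nonneg_left hs1 hF.le
        _ = 2^(2*k+1) * ((z/2)^(2*k+1) / ((2*k+1).factorial : ℝ)) := by
            rw [mul_one, hzz]; ring
        _ ≤ C * ((z/2)^(2*k+1) / ((2*k+1).factorial : ℝ)) :=
            mul_le_mul_of_nonneg_right hpow (by positivity)
        _ ≤ _ := le_add_of_nonneg_left h6
  have hS1 : Summable (fun k : ℕ => 3/Real.sqrt z * (z^(2*k+1) / ((2*k+1).factorial : ℝ))) :=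
    (summable_E hz0.le).mul_left _
  have hS2 : Summable (fun k : ℕ => C * ((z/2)^(2*k+1) / ((2*k+1).factorial : ℝ))) :=
    (summable_E (by linarith : (0:ℝ) ≤ z/2)).mul_left _
  have step1 : auxA z ≤ 3/Real.sqrt z * (∑' k : ℕ, z^(2*k+1) / ((2*k+1).factorial : ℝ))
      + C * (∑' k : ℕ, (z/2)^(2*k+1) / ((2*k+1).factorial : ℝ)) := by
    rw [← tsum_mul_left, ← tsum_mul_left, ← Summable.tsum_add hS1 hS2]
    exact (summable_A hz0.le).tsum_le_tsum key (hS1.add hS2)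
  have step2 : 3/Real.sqrt z * (∑' k : ℕ, z^(2*k+1) / ((2*k+1).factorial : ℝ))
      ≤ 3/Real.sqrt z * Real.exp z :=
    mul_le_mul_of_nonneg_left (E_le_exp hz0.le) (by positivity)
  have step3 : C * (∑' k : ℕ, (z/2)^(2*k+1) / ((2*k+1).factorial : ℝ)) ≤ C * Real.exp (z/2) :=
    mul_le_mul_of_nonneg_left (E_le_exp (by linarith : (0:ℝ) ≤ z/2)) hC0.le
  have step4 : C * Real.exp (z/2) ≤ Real.exp (7*z/10) := by
    rw [hC, ← Real.exp_add]
    apply Real.exp_le_exp.mpr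
    have hl2 : Real.log 2 ≤ 0.8 := by
      linarith [Real.log_two_lt_d9]
    nlinarith
  have e : 3/Real.sqrt z * Real.exp z = 3*Real.exp z/Real.sqrt z := by ring
  linarith [step1, step2, step3, step4]

lemma gamma_sq_ge (k : ℕ) : (k.factorial : ℝ)/2 ≤ Real.Gamma ((k:ℝ)+3/2)^2 := by
  have h1 := gamma_sqrt_le k
  have h2 := one_le_sqrt_succ k
  have h3 : ((4:ℝ)^k * k.factorial) ≤ ((2*k+1).factorial : ℝ) := by
    exact_mod_cast four_pow_fact_le k
  have h4 : ((2:ℝ))^(2*k+1) = 2 * 4^k := by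
    rw [pow_succ', pow_mul]; norm_num
  have h5 : (0:ℝ) < ((2*k+1).factorial : ℝ) := by positivity
  have h6 : (0:ℝ) < (4:ℝ)^k := by positivity
  nlinarith [sq_nonneg (Real.Gamma ((k:ℝ)+3/2))]

lemma summable_bessel {z : ℝ} (hz : 0 ≤ z) :
    Summable (fun k : ℕ =>
      (1 / (Nat.factorial k * Nat.factorial (k + 1) : ℝ)) * (z / 2) ^ (2 * k + 1)) := by
  have : ∀ k : ℕ, (1 / (Nat.factorial k * Nat.factorial (k + 1) : ℝ)) * (z / 2) ^ (2 * k + 1)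
      = (z/2)^(2*k+1) / ((Nat.factorial k : ℝ) * (Nat.factorial (k+1) : ℝ)) := by
    intro k; push_cast; ring
  rw [funext this]
  refine summable_aux (by linarith) (fun k => by positivity) (fun k => ?_)
  have h1 : (1:ℝ) ≤ ((k+1).factorial : ℝ) := by
    exact_mod_cast Nat.one_le_iff_ne_zero.mpr (Nat.factorial_pos (k+1)).ne'
  have h2 : (0:ℝ) < (k.factorial : ℝ) := by positivity
  nlinarith

lemma summable_struve {z : ℝ} (hz : 0 ≤ z) :
    Summable (fun k : ℕ =>
      (1 / (Real.Gamma ((k : ℝ) + 3 / 2)) ^ 2) * (z / 2) ^ (2 * k + 1)) := by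
  have hG : ∀ k : ℕ, (0:ℝ) < Real.Gamma ((k:ℝ)+3/2) :=
    fun k => Real.Gamma_pos_of_pos (by positivity)
  have : ∀ k : ℕ, (1 / (Real.Gamma ((k : ℝ) + 3 / 2)) ^ 2) * (z / 2) ^ (2 * k + 1)
      = (z/2)^(2*k+1) / (Real.Gamma ((k:ℝ)+3/2))^2 := by
    intro k; ring
  rw [funext this]
  exact summable_aux (by linarith) (fun k => by positivity) gamma_sq_ge

lemma besselI_nonneg {z : ℝ} (hz : 0 ≤ z) : 0 ≤ besselI 1 z := by
  apply tsum_nonneg; intro k; positivity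

lemma struveL0_nonneg {z : ℝ} (hz : 0 ≤ z) : 0 ≤ struveL0 z := by
  apply tsum_nonneg
  intro k
  have hG : (0:ℝ) < Real.Gamma ((k:ℝ)+3/2) := Real.Gamma_pos_of_pos (by positivity)
  positivity

lemma besselI_le_A {z : ℝ} (hz : 0 ≤ z) : besselI 1 z ≤ auxA z := by
  apply (summable_bessel hz).tsum_le_tsum _ (summable_A hz)
  intro k
  have hF : (0:ℝ) < ((2*k+1).factorial : ℝ) := by positivity
  have hs : (0:ℝ) < Real.sqrt ((k:ℝ)+1) := by positivity
  have hP : (0:ℝ) < (Nat.factorial k * Nat.factorial (k + 1) : ℝ) := by positivity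
  have hQP : ((2*k+1).factorial : ℝ) * Real.sqrt ((k:ℝ)+1)
      ≤ (Nat.factorial k * Nat.factorial (k + 1) : ℝ) * 2^(2*k+1) := by
    have h1 := fact_sqrt_le k
    have h2 : Real.sqrt ((k:ℝ)+1) ≤ Real.sqrt ((k:ℝ)+2) := Real.sqrt_le_sqrt (by linarith)
    have h3 : (0:ℝ) ≤ ((2*k+1).factorial : ℝ) := by positivity
    push_cast at h1 ⊢
    nlinarith
  have e1 : (1 / (Nat.factorial k * Nat.factorial (k + 1) : ℝ)) * (z / 2) ^ (2 * k + 1)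
      = z^(2*k+1) / ((Nat.factorial k * Nat.factorial (k + 1) : ℝ) * 2^(2*k+1)) := by
    rw [div_pow]; field_simp
  rw [e1]
  apply div_le_div_of_nonneg_left (by positivity) (by positivity) hQP

lemma struveL0_le_A {z : ℝ} (hz : 0 ≤ z) : struveL0 z ≤ auxA z := by
  apply (summable_struve hz).tsum_le_tsum _ (summable_A hz)
  intro k
  have hG : (0:ℝ) < Real.Gamma ((k:ℝ)+3/2) := Real.Gamma_pos_of_pos (by positivity)
  have hs : (0:ℝ) < Real.sqrt ((k:ℝ)+1) := by positivity
  have hQP : ((2*k+1).factorial : ℝ) * Real.sqrt ((k:ℝ)+1)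
      ≤ (Real.Gamma ((k:ℝ)+3/2))^2 * 2^(2*k+1) := by
    have := gamma_sqrt_le k; push_cast at this ⊢; linarith
  have e1 : (1 / (Real.Gamma ((k : ℝ) + 3 / 2)) ^ 2) * (z / 2) ^ (2 * k + 1)
      = z^(2*k+1) / ((Real.Gamma ((k:ℝ)+3/2))^2 * 2^(2*k+1)) := by
    rw [div_pow]; field_simp
  rw [e1]
  apply div_le_div_of_nonneg_left (by positivity) (by positivity) hQP

theorem noncommon_terms_tendsto_zero (c lam x : ℝ) (hc : 0 < c) (hlam : 0 < lam) :
    Filter.Tendsto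
        (fun t : ℝ =>
          lam * t / 2 * Real.exp (-(lam * t)) / Real.sqrt (c ^ 2 * t ^ 2 - x ^ 2) *
            besselI 1 (lam / c * Real.sqrt (c ^ 2 * t ^ 2 - x ^ 2)))
        Filter.atTop (nhds 0) ∧
      Filter.Tendsto
        (fun t : ℝ =>
          Real.exp (-(lam * t)) / (Real.pi * Real.sqrt (c ^ 2 * t ^ 2 - x ^ 2)) +
            lam * Real.exp (-(lam * t)) / (2 * c) *
              struveL0 (lam / c * Real.sqrt (c ^ 2 * t ^ 2 - x ^ 2)))
        Filter.atTop (nhds 0) := by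
  -- limits of the bounding functions
  have hsqrtTop : Tendsto Real.sqrt atTop atTop :=
    tendsto_atTop_atTop.mpr (fun b => ⟨b^2, fun a ha => Real.le_sqrt_of_sq_le ha⟩)
  have hlin : Tendsto (fun t : ℝ => lam*t/2) atTop atTop :=
    (tendsto_id.const_mul_atTop hlam).atTop_div_const (by norm_num)
  have h1 : Tendsto (fun t : ℝ => 3 / Real.sqrt (lam*t/2)) atTop (nhds 0) :=
    tendsto_const_nhds.div_atTop (hsqrtTop.comp hlin)
  have h2 : Tendsto (fun t : ℝ => Real.exp (-(3/10*(lam*t)))) atTop (nhds 0) := by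
    apply Real.tendsto_exp_atBot.comp
    exact tendsto_neg_atTop_atBot.comp
      ((tendsto_id.const_mul_atTop hlam).const_mul_atTop (by norm_num))
  have hexp0 : Tendsto (fun t : ℝ => Real.exp (-(lam*t))) atTop (nhds 0) := by
    apply Real.tendsto_exp_atBot.comp
    exact tendsto_neg_atTop_atBot.comp (tendsto_id.const_mul_atTop hlam)
  have hg : Tendsto (fun t : ℝ =>
      lam/c * (3/Real.sqrt (lam*t/2) + Real.exp (-(3/10*(lam*t))))) atTop (nhds 0) := by
    have := (h1.add h2).const_mul (lam/c)
    simpa using this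
  have hh : Tendsto (fun t : ℝ =>
      Real.exp (-(lam*t)) + lam/(2*c) * (3/Real.sqrt (lam*t/2)
        + Real.exp (-(3/10*(lam*t))))) atTop (nhds 0) := by
    have := hexp0.add ((h1.add h2).const_mul (lam/(2*c)))
    simpa using this
  -- basic eventual estimates
  have hfacts : ∀ t : ℝ, 2/lam ≤ t → Real.sqrt 2 * |x| / c ≤ t → 1 ≤ t →
      (0 < t ∧ 2 ≤ lam*t ∧ c*t/2 ≤ Real.sqrt (c^2*t^2 - x^2) ∧
        Real.sqrt (c^2*t^2 - x^2) ≤ c*t) := by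
    intro t hta htb htc
    have ht0 : (0:ℝ) < t := lt_of_lt_of_le one_pos htc
    have hlt2 : 2 ≤ lam*t := by rw [div_le_iff₀ hlam] at hta; linarith
    have hxc : Real.sqrt 2 * |x| ≤ c*t := by rw [div_le_iff₀ hc] at htb; linarith
    have hx2 : 2*x^2 ≤ c^2*t^2 := by
      nlinarith [mul_self_le_mul_self (by positivity : (0:ℝ) ≤ Real.sqrt 2 * |x|) hxc,
        Real.mul_self_sqrt (by norm_num : (0:ℝ) ≤ 2), abs_mul_abs_self x]
    have hs_lb : c*t/2 ≤ Real.sqrt (c^2*t^2 - x^2) :=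
      Real.le_sqrt_of_sq_le (by nlinarith)
    have hs_ub : Real.sqrt (c^2*t^2 - x^2) ≤ c*t := by
      have h := Real.sqrt_le_sqrt (show c^2*t^2 - x^2 ≤ (c*t)^2 by nlinarith [sq_nonneg x])
      rwa [Real.sqrt_sq (by positivity)] at h
    exact ⟨ht0, hlt2, hs_lb, hs_ub⟩
  constructor
  · apply tendsto_of_tendsto_of_tendsto_of_le_of_le' tendsto_const_nhds hg
    · filter_upwards [eventually_ge_atTop (1:ℝ)] with t htc
      have ht0 : (0:ℝ) ≤ t := le_trans zero_le_one htc
      have hz0 : (0:ℝ) ≤ lam / c * Real.sqrt (c ^ 2 * t ^ 2 - x ^ 2) := by positivity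
      have := besselI_nonneg hz0
      positivity
    · filter_upwards [eventually_ge_atTop (2/lam), eventually_ge_atTop (Real.sqrt 2 * |x| / c),
        eventually_ge_atTop (1:ℝ)] with t hta htb htc
      obtain ⟨ht0, hlt2, hs_lb, hs_ub⟩ := hfacts t hta htb htc
      set s := Real.sqrt (c^2*t^2 - x^2) with hsdef
      have hs0 : (0:ℝ) < s := lt_of_lt_of_le (by positivity) hs_lb
      set z := lam/c * s with hzdef
      have hz_ub : z ≤ lam*t := by
        have := mul_le_mul_of_nonneg_left hs_ub (by positivity : (0:ℝ) ≤ lam/c)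
        calc z ≤ lam/c*(c*t) := this
          _ = lam*t := by field_simp
      have hz_lb : lam*t/2 ≤ z := by
        have := mul_le_mul_of_nonneg_left hs_lb (by positivity : (0:ℝ) ≤ lam/c)
        calc lam*t/2 = lam/c*(c*t/2) := by field_simp
          _ ≤ z := this
      have hz1 : (1:ℝ) ≤ z := by linarith
      have hsz : (0:ℝ) < Real.sqrt z := Real.sqrt_pos.mpr (by linarith)
      have hszt : (0:ℝ) < Real.sqrt (lam*t/2) := Real.sqrt_pos.mpr (by linarith)
      have hB := (besselI_le_A (by linarith : (0:ℝ) ≤ z)).trans (A_le hz1)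
      have hB0 : (0:ℝ) ≤ 3*Real.exp z/Real.sqrt z + Real.exp (7*z/10) := by positivity
      have hpre0 : (0:ℝ) ≤ lam * t / 2 * Real.exp (-(lam * t)) / s := by positivity
      have hpre : lam * t / 2 * Real.exp (-(lam * t)) / s
          ≤ lam/c * Real.exp (-(lam*t)) := by
        have e1 : lam * t / 2 * Real.exp (-(lam * t)) / (c*t/2)
            = lam/c * Real.exp (-(lam*t)) := by
          field_simp
        calc lam * t / 2 * Real.exp (-(lam * t)) / s
            ≤ lam * t / 2 * Real.exp (-(lam * t)) / (c*t/2) :=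
              div_le_div_of_nonneg_left (by positivity) (by positivity) hs_lb
          _ = lam/c * Real.exp (-(lam*t)) := e1
      have hEz : Real.exp (-(lam*t)) * Real.exp z ≤ 1 := by
        rw [← Real.exp_add]
        exact Real.exp_le_one_iff.mpr (by linarith)
      have hE7 : Real.exp (-(lam*t)) * Real.exp (7*z/10) ≤ Real.exp (-(3/10*(lam*t))) := by
        rw [← Real.exp_add]
        exact Real.exp_le_exp.mpr (by linarith)
      have hterm1 : 3*(Real.exp (-(lam*t)) * Real.exp z)/Real.sqrt z
          ≤ 3/Real.sqrt (lam*t/2) := by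
        apply div_le_div₀ (by norm_num) (by nlinarith) hszt
        exact Real.sqrt_le_sqrt (by linarith)
      calc lam * t / 2 * Real.exp (-(lam * t)) / s * besselI 1 z
          ≤ lam * t / 2 * Real.exp (-(lam * t)) / s *
              (3*Real.exp z/Real.sqrt z + Real.exp (7*z/10)) :=
            mul_le_mul_of_nonneg_left hB hpre0
        _ ≤ lam/c * Real.exp (-(lam*t)) *
              (3*Real.exp z/Real.sqrt z + Real.exp (7*z/10)) :=
            mul_le_mul_of_nonneg_right hpre hB0
        _ = lam/c * (3*(Real.exp (-(lam*t)) * Real.exp z)/Real.sqrt z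
              + Real.exp (-(lam*t)) * Real.exp (7*z/10)) := by ring
        _ ≤ lam/c * (3/Real.sqrt (lam*t/2) + Real.exp (-(3/10*(lam*t)))) := by
            apply mul_le_mul_of_nonneg_left _ (by positivity)
            exact add_le_add hterm1 hE7
  · apply tendsto_of_tendsto_of_tendsto_of_le_of_le' tendsto_const_nhds hh
    · filter_upwards [eventually_ge_atTop (1:ℝ)] with t htc
      have ht0 : (0:ℝ) ≤ t := le_trans zero_le_one htc
      have hz0 : (0:ℝ) ≤ lam / c * Real.sqrt (c ^ 2 * t ^ 2 - x ^ 2) := by positivity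
      have h1 := struveL0_nonneg hz0
      have h2 : (0:ℝ) ≤ Real.exp (-(lam * t)) / (Real.pi * Real.sqrt (c ^ 2 * t ^ 2 - x ^ 2)) := by
        positivity
      positivity
    · filter_upwards [eventually_ge_atTop (2/lam), eventually_ge_atTop (Real.sqrt 2 * |x| / c),
        eventually_ge_atTop (1:ℝ), eventually_ge_atTop (1/c)] with t hta htb htc htd
      obtain ⟨ht0, hlt2, hs_lb, hs_ub⟩ := hfacts t hta htb htc
      set s := Real.sqrt (c^2*t^2 - x^2) with hsdef
      have hs0 : (0:ℝ) < s := lt_of_lt_of_le (by positivity) hs_lb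
      have hct1 : (1:ℝ) ≤ c*t := by rw [div_le_iff₀ hc] at htd; linarith
      set z := lam/c * s with hzdef
      have hz_ub : z ≤ lam*t := by
        have := mul_le_mul_of_nonneg_left hs_ub (by positivity : (0:ℝ) ≤ lam/c)
        calc z ≤ lam/c*(c*t) := this
          _ = lam*t := by field_simp
      have hz_lb : lam*t/2 ≤ z := by
        have := mul_le_mul_of_nonneg_left hs_lb (by positivity : (0:ℝ) ≤ lam/c)
        calc lam*t/2 = lam/c*(c*t/2) := by field_simp
          _ ≤ z := this
      have hz1 : (1:ℝ) ≤ z := by linarith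
      have hsz : (0:ℝ) < Real.sqrt z := Real.sqrt_pos.mpr (by linarith)
      have hszt : (0:ℝ) < Real.sqrt (lam*t/2) := Real.sqrt_pos.mpr (by linarith)
      have hB := (struveL0_le_A (by linarith : (0:ℝ) ≤ z)).trans (A_le hz1)
      have hB0 : (0:ℝ) ≤ 3*Real.exp z/Real.sqrt z + Real.exp (7*z/10) := by positivity
      -- first term
      have hfirst : Real.exp (-(lam * t)) / (Real.pi * s) ≤ Real.exp (-(lam*t)) := by
        apply div_le_self (Real.exp_nonneg _)
        nlinarith [Real.pi_gt_three]
      -- second term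
      have hpre : lam * Real.exp (-(lam * t)) / (2 * c) = lam/(2*c) * Real.exp (-(lam*t)) := by
        ring
      have hEz : Real.exp (-(lam*t)) * Real.exp z ≤ 1 := by
        rw [← Real.exp_add]
        exact Real.exp_le_one_iff.mpr (by linarith)
      have hE7 : Real.exp (-(lam*t)) * Real.exp (7*z/10) ≤ Real.exp (-(3/10*(lam*t))) := by
        rw [← Real.exp_add]
        exact Real.exp_le_exp.mpr (by linarith)
      have hterm1 : 3*(Real.exp (-(lam*t)) * Real.exp z)/Real.sqrt z
          ≤ 3/Real.sqrt (lam*t/2) := by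
        apply div_le_div₀ (by norm_num) (by nlinarith) hszt
        exact Real.sqrt_le_sqrt (by linarith)
      have hsecond : lam * Real.exp (-(lam * t)) / (2 * c) * struveL0 z
          ≤ lam/(2*c) * (3/Real.sqrt (lam*t/2) + Real.exp (-(3/10*(lam*t)))) := by
        calc lam * Real.exp (-(lam * t)) / (2 * c) * struveL0 z
            ≤ lam * Real.exp (-(lam * t)) / (2 * c) *
                (3*Real.exp z/Real.sqrt z + Real.exp (7*z/10)) :=
              mul_le_mul_of_nonneg_left hB (by positivity)
          _ = lam/(2*c) * (3*(Real.exp (-(lam*t)) * Real.exp z)/Real.sqrt z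
                + Real.exp (-(lam*t)) * Real.exp (7*z/10)) := by ring
          _ ≤ lam/(2*c) * (3/Real.sqrt (lam*t/2) + Real.exp (-(3/10*(lam*t)))) := by
              apply mul_le_mul_of_nonneg_left _ (by positivity)
              exact add_le_add hterm1 hE7
      exact add_le_add hfirst hsecond
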